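/- Dirichlet hyperbola identity for the Titchmarsh divisor sum: for x ≥ 2, Σ_{1 < n ≤ x} Λ(n)·τ(n−1) = 2·Σ_{q ≤ √x} (ψ(x; q, 1) − ψ(q²; q, 1)) + O(√x · log x), where ψ(x; q, a) = Σ_{n ≤ x, n ≡ a (mod q)} Λ(n). -/

import Mathlib

open Finset ArithmeticFunction

/-- `ψ(x; q, a) = ∑_{n ≤ x, n ≡ a (mod q)} Λ(n)`. -/
noncomputable def psi (x : ℝ) (q a : ℕ) : ℝ :=
  ∑ n ∈ Finset.Icc 1 ⌊x⌋₊, if n % q = a % q then Λ n else 0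

lemma aux_sq_count (m : ℕ) (hm : 0 < m) :
    m.divisors.card + (if IsSquare m then 1 else 0)
      = 2 * ((m.divisors.filter fun d => d ^ 2 ≤ m).card) := by
  set A := m.divisors.filter fun d => d ^ 2 ≤ m with hA
  set B := m.divisors.filter fun d => m ≤ d ^ 2 with hB
  have hab : A.card = B.card := by
    have h1 : A.card = ∑ d ∈ m.divisors, (if d ^ 2 ≤ m then 1 else 0) := by
      rw [hA, ← Finset.sum_filter]; simp
    have h2 : B.card = ∑ d ∈ m.divisors, (if m ≤ d ^ 2 then 1 else 0) := by
      rw [hB, ← Finset.sum_filter]; simp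
    have h3 := Nat.sum_div_divisors m (fun d => if d ^ 2 ≤ m then 1 else 0)
    rw [h1, h2, ← h3]
    refine Finset.sum_congr rfl fun d hd => ?_
    rw [Nat.mem_divisors] at hd
    obtain ⟨e, he⟩ := hd.1
    have hd0 : 0 < d := Nat.pos_of_mem_divisors (Nat.mem_divisors.mpr hd)
    have he0 : 0 < e := by
      rcases Nat.eq_zero_or_pos e with h | h
      · exfalso; rw [h, mul_zero] at he; omega
      · exact h
    have hmd : m / d = e := by rw [he]; exact Nat.mul_div_cancel_left e hd0
    rw [hmd]
    have : (e ^ 2 ≤ m) ↔ (m ≤ d ^ 2) := by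
      rw [he]
      constructor
      · intro h
        have : e ≤ d := by nlinarith
        nlinarith
      · intro h
        have : e ≤ d := by nlinarith
        nlinarith
    simp [this]
  have hunion : A ∪ B = m.divisors := by
    ext d
    simp only [hA, hB, Finset.mem_union, Finset.mem_filter]
    constructor
    · rintro (⟨h, -⟩ | ⟨h, -⟩) <;> exact h
    · intro h
      rcases le_total (d ^ 2) m with h' | h'
      · exact Or.inl ⟨h, h'⟩
      · exact Or.inr ⟨h, h'⟩
  have hinter : A ∩ B = m.divisors.filter fun d => d ^ 2 = m := by
    rw [hA, hB, ← Finset.filter_and]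
    refine Finset.filter_congr fun d _ => ?_
    simp [le_antisymm_iff]
  have hcard : (A ∩ B).card = if IsSquare m then 1 else 0 := by
    rw [hinter]
    by_cases hs : IsSquare m
    · obtain ⟨r, hr⟩ := hs
      have hr0 : 0 < r := by
        rcases Nat.eq_zero_or_pos r with h | h
        · exfalso; rw [h, mul_zero] at hr; omega
        · exact h
      have : m.divisors.filter (fun d => d ^ 2 = m) = {r} := by
        ext d
        simp only [Finset.mem_filter, Nat.mem_divisors, Finset.mem_singleton]
        constructor
        · rintro ⟨-, hd⟩
          have : d ^ 2 = r ^ 2 := by rw [hd, hr]; ring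
          exact Nat.pow_left_injective (by norm_num) this
        · rintro rfl
          exact ⟨⟨⟨d, hr⟩, hm.ne'⟩, by rw [hr]; ring⟩
      rw [this, Finset.card_singleton, if_pos ⟨r, hr⟩]
    · have : m.divisors.filter (fun d => d ^ 2 = m) = ∅ := by
        rw [Finset.filter_eq_empty_iff]
        intro d _ hd
        exact hs ⟨d, by rw [← hd]; ring⟩
      rw [this]; simp [hs]
  have := Finset.card_union_add_card_inter A B
  rw [hunion, hcard] at this
  omega

theorem stmt_16 :
    ∃ C : ℝ, 0 < C ∧ ∀ x : ℝ, 2 ≤ x →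
      |(∑ n ∈ Finset.Icc 2 ⌊x⌋₊, Λ n * ((n - 1).divisors.card : ℝ))
          - 2 * ∑ q ∈ Finset.Icc 1 ⌊Real.sqrt x⌋₊, (psi x q 1 - psi ((q : ℝ) ^ 2) q 1)|
        ≤ C * Real.sqrt x * Real.log x := by
  refine ⟨1, one_pos, fun x hx => ?_⟩
  set N := ⌊x⌋₊ with hN
  set Q := ⌊Real.sqrt x⌋₊ with hQ
  have hx0 : (0:ℝ) < x := by linarith
  have hNx : (N : ℝ) ≤ x := Nat.floor_le hx0.le
  have hQx : (Q : ℝ) ≤ Real.sqrt x := Nat.floor_le (Real.sqrt_nonneg x)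
  have hq2N : ∀ q : ℕ, q ≤ Q → q ^ 2 ≤ N := by
    intro q hq
    have h1 : (q : ℝ) ≤ Real.sqrt x := le_trans (by exact_mod_cast hq) hQx
    have h2 : (q : ℝ) ^ 2 ≤ x := by
      nlinarith [Real.sq_sqrt hx0.le, Real.sqrt_nonneg x]
    exact Nat.le_floor (by push_cast; exact h2)
  have hdQ : ∀ d : ℕ, (d:ℝ) ^ 2 ≤ x → d ≤ Q := by
    intro d hd
    exact Nat.le_floor ((Real.le_sqrt (by positivity) hx0.le).mpr hd)
  -- Step A: psi difference
  have stepA : ∀ q ∈ Finset.Icc 1 Q,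
      psi x q 1 - psi ((q : ℝ) ^ 2) q 1
        = ∑ n ∈ Finset.Ioc (q ^ 2) N, (if n % q = 1 % q then Λ n else 0) := by
    intro q hq
    rw [Finset.mem_Icc] at hq
    have hfloor : ⌊(q : ℝ) ^ 2⌋₊ = q ^ 2 := by
      rw [show ((q:ℝ)^2) = ((q ^ 2 : ℕ) : ℝ) by push_cast; ring, Nat.floor_natCast]
    have key := Finset.sum_Ioc_consecutive (f := fun n => if n % q = 1 % q then Λ n else 0)
      (Nat.zero_le (q ^ 2)) (hq2N q hq.2)
    simp only [psi, hfloor, ← hN, show Finset.Icc 1 N = Finset.Ioc 0 N from Finset.Icc_add_one_left_eq_Ioc 0 N,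
      show Finset.Icc 1 (q^2) = Finset.Ioc 0 (q^2) from Finset.Icc_add_one_left_eq_Ioc 0 (q^2)]
    linarith [key]
  -- Step B: rewrite as sum over n
  have stepB : ∑ q ∈ Finset.Icc 1 Q, (psi x q 1 - psi ((q : ℝ) ^ 2) q 1)
      = ∑ n ∈ Finset.Icc 2 N,
          Λ n * (((n - 1).divisors.filter fun d => d ^ 2 ≤ n - 1).card : ℝ) := by
    rw [Finset.sum_congr rfl stepA]
    have h1 : ∀ q ∈ Finset.Icc 1 Q,
        (∑ n ∈ Finset.Ioc (q ^ 2) N, (if n % q = 1 % q then Λ n else 0))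
          = ∑ n ∈ Finset.Icc 2 N, (if q ^ 2 < n ∧ n % q = 1 % q then Λ n else 0) := by
      intro q hq
      rw [Finset.mem_Icc] at hq
      have hsub : Finset.Ioc (q ^ 2) N = (Finset.Icc 2 N).filter (fun n => q ^ 2 < n) := by
        ext n
        simp only [Finset.mem_Ioc, Finset.mem_filter, Finset.mem_Icc]
        have : 1 ≤ q ^ 2 := by nlinarith [hq.1]
        omega
      rw [hsub, Finset.sum_filter]
      refine Finset.sum_congr rfl fun n _ => ?_
      by_cases h : q ^ 2 < n <;> simp [h]
    rw [Finset.sum_congr rfl h1, Finset.sum_comm]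
    refine Finset.sum_congr rfl fun n hn => ?_
    rw [Finset.mem_Icc] at hn
    have hset : (Finset.Icc 1 Q).filter (fun q => q ^ 2 < n ∧ n % q = 1 % q)
        = (n - 1).divisors.filter fun d => d ^ 2 ≤ n - 1 := by
      ext q
      simp only [Finset.mem_filter, Finset.mem_Icc, Nat.mem_divisors]
      constructor
      · rintro ⟨⟨hq1, hq2⟩, hq3, hq4⟩
        have hdvd : q ∣ n - 1 := by
          have := (Nat.modEq_iff_dvd' (show 1 ≤ n by omega)).mp hq4.symm
          exact this
        exact ⟨⟨hdvd, by omega⟩, by omega⟩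
      · rintro ⟨⟨hdvd, hne⟩, hle⟩
        have hq0 : 0 < q := by
          rcases Nat.eq_zero_or_pos q with h | h
          · exfalso; rw [h] at hdvd; simp at hdvd; omega
          · exact h
        have hqQ : q ≤ Q := by
          apply hdQ
          have : ((q ^ 2 : ℕ) : ℝ) ≤ (N : ℝ) := by
            exact_mod_cast le_trans hle (by omega)
          push_cast at this ⊢
          linarith
        have hmod : n % q = 1 % q :=
          ((Nat.modEq_iff_dvd' (show 1 ≤ n by omega)).mpr hdvd).symm
        exact ⟨⟨hq0, hqQ⟩, by omega, hmod⟩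
    rw [← hset, ← Finset.sum_filter, Finset.sum_const, nsmul_eq_mul, mul_comm]
  -- key identity
  have key : (∑ n ∈ Finset.Icc 2 N, Λ n * ((n - 1).divisors.card : ℝ))
      - 2 * ∑ q ∈ Finset.Icc 1 Q, (psi x q 1 - psi ((q : ℝ) ^ 2) q 1)
      = - ∑ n ∈ Finset.Icc 2 N, (if IsSquare (n - 1) then Λ n else 0) := by
    rw [stepB, Finset.mul_sum, ← Finset.sum_sub_distrib, ← Finset.sum_neg_distrib]
    refine Finset.sum_congr rfl fun n hn => ?_
    rw [Finset.mem_Icc] at hn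
    have hm : 0 < n - 1 := by omega
    have h := aux_sq_count (n - 1) hm
    by_cases hs : IsSquare (n - 1)
    · rw [if_pos hs] at h ⊢
      have hτ : ((n - 1).divisors.card : ℝ) + 1
          = 2 * (((n - 1).divisors.filter fun d => d ^ 2 ≤ n - 1).card : ℝ) := by
        exact_mod_cast h
      linear_combination Λ n * hτ
    · rw [if_neg hs] at h ⊢
      have hτ : ((n - 1).divisors.card : ℝ)
          = 2 * (((n - 1).divisors.filter fun d => d ^ 2 ≤ n - 1).card : ℝ) := by
        exact_mod_cast h
      linear_combination Λ n * hτ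
  rw [key, abs_neg]
  have hE0 : (0:ℝ) ≤ ∑ n ∈ Finset.Icc 2 N, (if IsSquare (n - 1) then Λ n else 0) := by
    refine Finset.sum_nonneg fun n _ => ?_
    split <;> simp [vonMangoldt_nonneg]
  rw [abs_of_nonneg hE0, ← Finset.sum_filter]
  set S := (Finset.Icc 2 N).filter (fun n => IsSquare (n - 1)) with hS
  have hlog0 : 0 ≤ Real.log x := Real.log_nonneg (by linarith)
  have hbound : ∀ n ∈ S, Λ n ≤ Real.log x := by
    intro n hn
    rw [hS, Finset.mem_filter, Finset.mem_Icc] at hn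
    refine le_trans vonMangoldt_le_log ?_
    refine Real.log_le_log (by exact_mod_cast (show 0 < n by have := hn.1.1; omega)) ?_
    calc (n : ℝ) ≤ (N : ℝ) := by exact_mod_cast hn.1.2
    _ ≤ x := hNx
  have hcardS : S.card ≤ Q := by
    have h := Finset.card_le_card_of_injOn (fun n => Nat.sqrt (n - 1))
      (s := S) (t := Finset.Icc 1 Q) ?_ ?_
    · simpa [Nat.card_Icc] using h
    · intro n hn
      simp only [hS, Finset.mem_coe, Finset.mem_filter, Finset.mem_Icc] at hn
      obtain ⟨⟨h2, hNn⟩, r, hr⟩ := hn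
      have hsq : Nat.sqrt (n - 1) = r := by rw [hr, Nat.sqrt_eq]
      simp only [Finset.mem_coe, Finset.mem_Icc, hsq]
      constructor
      · rcases Nat.eq_zero_or_pos r with h | h
        · exfalso; rw [h, mul_zero] at hr; omega
        · exact h
      · apply hdQ
        have : ((r ^ 2 : ℕ) : ℝ) ≤ (N : ℝ) := by
          have : r ^ 2 ≤ N := by rw [pow_two, ← hr]; omega
          exact_mod_cast this
        push_cast at this
        linarith
    · intro a ha b hb hab
      simp only [hS, Finset.coe_filter, Set.mem_setOf_eq, Finset.mem_Icc] at ha hb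
      obtain ⟨⟨ha2, -⟩, ra, hra⟩ := ha
      obtain ⟨⟨hb2, -⟩, rb, hrb⟩ := hb
      have h1 : Nat.sqrt (a - 1) = ra := by rw [hra, Nat.sqrt_eq]
      have h2 : Nat.sqrt (b - 1) = rb := by rw [hrb, Nat.sqrt_eq]
      simp only at hab
      rw [h1, h2] at hab
      subst hab
      omega
  calc (∑ n ∈ S, Λ n) ≤ S.card • Real.log x := Finset.sum_le_card_nsmul S _ _ hbound
    _ = (S.card : ℝ) * Real.log x := by rw [nsmul_eq_mul]
    _ ≤ (Q : ℝ) * Real.log x := by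
        apply mul_le_mul_of_nonneg_right _ hlog0
        exact_mod_cast hcardS
    _ ≤ Real.sqrt x * Real.log x := mul_le_mul_of_nonneg_right hQx hlog0
    _ = 1 * Real.sqrt x * Real.log x := by ring
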